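/- For any element m of a left 𝕆-module M, the submodule generated by m is a finite-dimensional real vector space of dimension at most 128. -/

import Mathlib

noncomputable section

open Quaternion

/-- The octonions, via the Cayley–Dickson construction on the quaternions. -/
def Octonion : Type := ℍ[ℝ] × ℍ[ℝ]

namespace Octonion

instance : AddCommGroup Octonion := inferInstanceAs (AddCommGroup (ℍ[ℝ] × ℍ[ℝ]))
instance : Module ℝ Octonion := inferInstanceAs (Module ℝ (ℍ[ℝ] × ℍ[ℝ]))

instance : One Octonion := ⟨((1 : ℍ[ℝ]), (0 : ℍ[ℝ]))⟩
instance : Mul Octonion :=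
  ⟨fun x y => (x.1 * y.1 - star y.2 * x.2, y.2 * x.1 + x.2 * star y.1)⟩
/-- Octonionic conjugation. -/
instance : Star Octonion := ⟨fun x => (star x.1, -x.2)⟩

/-- The associator `[a,b,c] = (ab)c - a(bc)`. -/
def assoc (a b c : Octonion) : Octonion := a * b * c - a * (b * c)

/-- The standard imaginary units `e 0 = e₁, …, e 6 = e₇`. -/
def e : Fin 7 → Octonion
  | 0 => ((⟨0,1,0,0⟩ : ℍ[ℝ]), 0)
  | 1 => ((⟨0,0,1,0⟩ : ℍ[ℝ]), 0)
  | 2 => ((⟨0,0,0,1⟩ : ℍ[ℝ]), 0)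
  | 3 => (0, (1 : ℍ[ℝ]))
  | 4 => (0, (⟨0,1,0,0⟩ : ℍ[ℝ]))
  | 5 => (0, (⟨0,0,1,0⟩ : ℍ[ℝ]))
  | 6 => (0, (⟨0,0,0,1⟩ : ℍ[ℝ]))

end Octonion

/-- A left `𝕆`-module: a real vector space with an `ℝ`-bilinear octonion action
satisfying `1 • m = m` and the alternating rule. -/
structure LeftOModule (M : Type) [AddCommGroup M] [Module ℝ M] where
  smul : Octonion →ₗ[ℝ] M →ₗ[ℝ] M
  one_smul : ∀ m : M, smul 1 m = m
  alt : ∀ (p q : Octonion) (m : M),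
    smul (p * q) m - smul p (smul q m) = -(smul (q * p) m - smul q (smul p m))

/-- An `𝕆`-bimodule: compatible left and right `𝕆`-module structures with
`[p,q,m] = [q,m,p] = [m,p,q]`.  Here `l p m` is `p * m` and `r p m` is `m * p`. -/
structure OBimodule (M : Type) [AddCommGroup M] [Module ℝ M] where
  l : Octonion →ₗ[ℝ] M →ₗ[ℝ] M
  r : Octonion →ₗ[ℝ] M →ₗ[ℝ] M
  one_l : ∀ m : M, l 1 m = m
  one_r : ∀ m : M, r 1 m = m
  /-- left alternating rule `[p,q,m] = -[q,p,m]` -/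
  alt_l : ∀ (p q : Octonion) (m : M),
    l (p * q) m - l p (l q m) = -(l (q * p) m - l q (l p m))
  /-- right alternating rule `[m,p,q] = -[m,q,p]` -/
  alt_r : ∀ (p q : Octonion) (m : M),
    r q (r p m) - r (p * q) m = -(r p (r q m) - r (q * p) m)
  /-- `[p,q,m] = [q,m,p]` -/
  comp_lm : ∀ (p q : Octonion) (m : M),
    l (p * q) m - l p (l q m) = r p (l q m) - l q (r p m)
  /-- `[p,q,m] = [m,p,q]` -/
  comp_rm : ∀ (p q : Octonion) (m : M),
    l (p * q) m - l p (l q m) = r q (r p m) - r (p * q) m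

namespace Octonion

lemma mul_def (x y : Octonion) :
    x * y = (x.1 * y.1 - star y.2 * x.2, y.2 * x.1 + x.2 * star y.1) := rfl

lemma one_def : (1 : Octonion) = ((1 : ℍ[ℝ]), (0 : ℍ[ℝ])) := rfl

lemma neg_def (x : Octonion) : -x = (-x.1, -x.2) := rfl

lemma add_def (x y : Octonion) : x + y = (x.1 + y.1, x.2 + y.2) := rfl

lemma smul_def (c : ℝ) (x : Octonion) : c • x = (c • x.1, c • x.2) := rfl

lemma qext {a b : ℍ[ℝ]} (h1 : a.re = b.re) (h2 : a.imI = b.imI) (h3 : a.imJ = b.imJ)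
    (h4 : a.imK = b.imK) : a = b := QuaternionAlgebra.ext h1 h2 h3 h4

lemma e1re (i : Fin 7) : (e i).1.re = 0 := by fin_cases i <;> rfl
lemma e1i (i : Fin 7) : (e i).1.imI = if i = 0 then 1 else 0 := by fin_cases i <;> rfl
lemma e1j (i : Fin 7) : (e i).1.imJ = if i = 1 then 1 else 0 := by fin_cases i <;> rfl
lemma e1k (i : Fin 7) : (e i).1.imK = if i = 2 then 1 else 0 := by fin_cases i <;> rfl
lemma e2re (i : Fin 7) : (e i).2.re = if i = 3 then 1 else 0 := by fin_cases i <;> rfl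
lemma e2i (i : Fin 7) : (e i).2.imI = if i = 4 then 1 else 0 := by fin_cases i <;> rfl
lemma e2j (i : Fin 7) : (e i).2.imJ = if i = 5 then 1 else 0 := by fin_cases i <;> rfl
lemma e2k (i : Fin 7) : (e i).2.imK = if i = 6 then 1 else 0 := by fin_cases i <;> rfl

lemma e_mul_self (i : Fin 7) : e i * e i = -1 := by
  fin_cases i <;>
    · rw [mul_def, neg_def, one_def]
      refine Prod.ext ?_ ?_ <;> · apply qext <;> simp [e1re, e1i, e1j, e1k, e2re, e2i, e2j, e2k]

set_option maxHeartbeats 1600000 in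
lemma e_mul_anticomm {i j : Fin 7} (h : i ≠ j) : e i * e j = -(e j * e i) := by
  fin_cases i <;> fin_cases j <;> first
  | exact absurd rfl h
  | (rw [neg_def]; simp only [mul_def]
     refine Prod.ext ?_ ?_ <;> · apply qext <;> simp [e1re, e1i, e1j, e1k, e2re, e2i, e2j, e2k])

lemma add_fst (x y : Octonion) : (x + y).1 = x.1 + y.1 := rfl
lemma add_snd (x y : Octonion) : (x + y).2 = x.2 + y.2 := rfl
lemma smul_fst (c : ℝ) (x : Octonion) : (c • x).1 = c • x.1 := rfl
lemma smul_snd (c : ℝ) (x : Octonion) : (c • x).2 = c • x.2 := rfl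
lemma one_fst : (1 : Octonion).1 = 1 := rfl
lemma one_snd : (1 : Octonion).2 = 0 := rfl

lemma span_octonion (p : Octonion) :
    p = p.1.re • 1 + p.1.imI • e 0 + p.1.imJ • e 1 + p.1.imK • e 2 +
      p.2.re • e 3 + p.2.imI • e 4 + p.2.imJ • e 5 + p.2.imK • e 6 := by
  refine Prod.ext ?_ ?_ <;> · apply qext <;> simp [add_fst, add_snd, smul_fst, smul_snd, one_fst, one_snd, e1re, e1i, e1j, e1k, e2re, e2i, e2j, e2k]

end Octonion

namespace LeftOModule

open Octonion

variable {M : Type} [AddCommGroup M] [Module ℝ M]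

lemma smul_sq (σ : LeftOModule M) (p : Octonion) (x : M) :
    σ.smul (p * p) x = σ.smul p (σ.smul p x) := by
  have h := σ.alt p p x
  have h2 : σ.smul (p * p) x - σ.smul p (σ.smul p x) = 0 := by
    have h3 := add_eq_zero_iff_eq_neg.mpr h
    have h4 : (2 : ℝ) • (σ.smul (p * p) x - σ.smul p (σ.smul p x)) = 0 := by
      rw [two_smul]; exact h3
    rcases smul_eq_zero.mp h4 with h5 | h5
    · norm_num at h5
    · exact h5
  exact sub_eq_zero.mp h2

lemma smul_e_e (σ : LeftOModule M) (i : Fin 7) (x : M) :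
    σ.smul (e i) (σ.smul (e i) x) = -x := by
  rw [← smul_sq σ (e i) x, e_mul_self, map_neg, LinearMap.neg_apply, σ.one_smul]

lemma smul_anticomm (σ : LeftOModule M) {i j : Fin 7} (h : i ≠ j) (x : M) :
    σ.smul (e i) (σ.smul (e j) x) = -σ.smul (e j) (σ.smul (e i) x) := by
  have h1 := σ.alt (e i) (e j) x
  rw [e_mul_anticomm h, map_neg, LinearMap.neg_apply] at h1
  have h2 : σ.smul (e i) (σ.smul (e j) x) + σ.smul (e j) (σ.smul (e i) x) = 0 := by
    generalize σ.smul (e j * e i) x = A at h1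
    generalize σ.smul (e i) (σ.smul (e j) x) = B at h1 ⊢
    generalize σ.smul (e j) (σ.smul (e i) x) = C at h1 ⊢
    calc B + C = -(A - C) - (-A - B) := by abel
    _ = (-A - B) - (-A - B) := by rw [h1]
    _ = 0 := sub_self _
  exact eq_neg_of_add_eq_zero_left h2

/-- Iterated left multiplication by the units indexed by a list. -/
def wl (σ : LeftOModule M) : List (Fin 7) → M → M
  | [], x => x
  | i :: t, x => σ.smul (e i) (wl σ t x)

lemma key (σ : LeftOModule M) (m : M) :
    ∀ l : List (Fin 7), l.Pairwise (· < ·) → ∀ i : Fin 7,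
      ∃ l' : List (Fin 7), l'.Pairwise (· < ·) ∧ (∀ k ∈ l', k ∈ i :: l) ∧
        (wl σ (i :: l) m = wl σ l' m ∨ wl σ (i :: l) m = -wl σ l' m) := by
  intro l
  induction l with
  | nil => exact fun _ i => ⟨[i], List.pairwise_singleton _ i, by simp, Or.inl rfl⟩
  | cons j t ih =>
    intro hl i
    have hjt := List.pairwise_cons.mp hl
    rcases lt_trichotomy i j with hij | rfl | hji
    · refine ⟨i :: j :: t, List.pairwise_cons.mpr ⟨?_, hl⟩, by simp, Or.inl rfl⟩
      intro k hk
      rcases List.mem_cons.mp hk with rfl | hk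
      · exact hij
      · exact hij.trans (hjt.1 k hk)
    · refine ⟨t, hjt.2, fun k hk => by simp [hk], Or.inr ?_⟩
      show σ.smul (e i) (σ.smul (e i) (wl σ t m)) = _
      rw [smul_e_e]
    · obtain ⟨l'', hs, hmem, hcase⟩ := ih hjt.2 i
      have hlt : ∀ k ∈ l'', j < k := by
        intro k hk
        rcases List.mem_cons.mp (hmem k hk) with rfl | hk'
        · exact hji
        · exact hjt.1 k hk'
      refine ⟨j :: l'', List.pairwise_cons.mpr ⟨hlt, hs⟩, ?_, ?_⟩
      · intro k hk
        rcases List.mem_cons.mp hk with rfl | hk'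
        · simp
        · rcases List.mem_cons.mp (hmem k hk') with rfl | h''
          · simp
          · simp [h'']
      · have h1 : wl σ (i :: j :: t) m = -σ.smul (e j) (wl σ (i :: t) m) := by
          show σ.smul (e i) (σ.smul (e j) (wl σ t m)) =
            -σ.smul (e j) (σ.smul (e i) (wl σ t m))
          exact smul_anticomm σ (ne_of_gt hji) _
        rcases hcase with h2 | h2
        · right
          rw [h1, h2]; rfl
        · left
          rw [h1, h2, map_neg, neg_neg]; rfl

lemma smul_expand (σ : LeftOModule M) (p : Octonion) (x : M) :
    σ.smul p x =
      p.1.re • x + p.1.imI • σ.smul (e 0) x + p.1.imJ • σ.smul (e 1) x +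
        p.1.imK • σ.smul (e 2) x + p.2.re • σ.smul (e 3) x + p.2.imI • σ.smul (e 4) x +
        p.2.imJ • σ.smul (e 5) x + p.2.imK • σ.smul (e 6) x := by
  conv_lhs => rw [span_octonion p]
  simp only [map_add, map_smul, LinearMap.add_apply, LinearMap.smul_apply, σ.one_smul]

end LeftOModule

open Octonion LeftOModule


/-- The submodule of a left `𝕆`-module generated by a single element is a
finite-dimensional real vector space of dimension at most `128`. -/
theorem cyclic_submodule_findim {M : Type} [AddCommGroup M] [Module ℝ M]
    (σ : LeftOModule M) (m : M) :
    let N : Submodule ℝ M :=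
      sInf {S : Submodule ℝ M | m ∈ S ∧ ∀ p : Octonion, ∀ x ∈ S, σ.smul p x ∈ S}
    FiniteDimensional ℝ N ∧ Module.finrank ℝ N ≤ 128 := by
  classical
  intro N
  set g : Finset (Fin 7) → M := fun s => wl σ (s.sort (· ≤ ·)) m with hg
  set S : Submodule ℝ M := Submodule.span ℝ (Set.range g) with hS
  have hgen : ∀ l : List (Fin 7), l.Pairwise (· < ·) → wl σ l m ∈ S := by
    intro l hl
    have h1 : l.toFinset.sort (· ≤ ·) = l :=
      (List.toFinset_sort _ hl.nodup).mpr (hl.imp le_of_lt)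
    have h2 : g l.toFinset = wl σ l m := by rw [hg]; simp only; rw [h1]
    exact Submodule.subset_span ⟨l.toFinset, h2⟩
  have hm : m ∈ S := hgen [] List.Pairwise.nil
  have hmap : ∀ i : Fin 7, ∀ x ∈ S, σ.smul (e i) x ∈ S := by
    intro i x hx
    have hle : Submodule.map (σ.smul (e i)) S ≤ S := by
      rw [hS, Submodule.map_span, Submodule.span_le]
      rintro _ ⟨_, ⟨s, rfl⟩, rfl⟩
      obtain ⟨l', hs', -, hc⟩ := key σ m (s.sort (· ≤ ·)) (List.sortedLT_iff_pairwise.mp (Finset.sortedLT_sort s)) i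
      have hw : σ.smul (e i) (g s) = wl σ (i :: s.sort (· ≤ ·)) m := rfl
      rcases hc with h | h
      · rw [SetLike.mem_coe, hw, h]; exact hgen l' hs'
      · rw [SetLike.mem_coe, hw, h]; exact S.neg_mem (hgen l' hs')
    exact hle ⟨x, hx, rfl⟩
  have hclosed : ∀ p : Octonion, ∀ x ∈ S, σ.smul p x ∈ S := by
    intro p x hx
    rw [smul_expand σ p x]
    refine add_mem (add_mem (add_mem (add_mem (add_mem (add_mem (add_mem ?_ ?_) ?_) ?_) ?_) ?_) ?_) ?_ <;>
      first
        | exact S.smul_mem _ hx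
        | exact S.smul_mem _ (hmap _ x hx)
  have hNS : N ≤ S := sInf_le ⟨hm, hclosed⟩
  haveI hfin : FiniteDimensional ℝ S :=
    FiniteDimensional.span_of_finite ℝ (Set.finite_range g)
  refine ⟨Submodule.finiteDimensional_of_le hNS, ?_⟩
  calc Module.finrank ℝ N ≤ Module.finrank ℝ S := Submodule.finrank_mono hNS
  _ ≤ Fintype.card (Finset (Fin 7)) := by
      simpa [Set.finrank] using finrank_range_le_card (R := ℝ) g
  _ = 128 := by simp [Fintype.card_finset]
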